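/- Let T = [[a,b],[c,d]] be a J-unitary operator on K and let φ ∈ K satisfy Tφ = φ. Then ⟨φ, [[−(a*)^{-1}, 0],[0, d^{-1}]] φ⟩ = −⟨φ, Jφ⟩, where [[−(a*)^{-1}, 0],[0, d^{-1}]] denotes the block-diagonal operator on K = H ⊕ H with entries −(a*)^{-1} and d^{-1}. -/

import Mathlib

noncomputable section

open ContinuousLinearMap

variable {H : Type*} [NormedAddCommGroup H] [InnerProductSpace ℂ H] [CompleteSpace H]
  [TopologicalSpace.SeparableSpace H]

local notation "K" => WithLp 2 (H × H)

/-- The 2×2 block operator `[[a,b],[c,d]]` on `K = H ⊕ H`. -/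
def blk (a b c d : H →L[ℂ] H) : K →L[ℂ] K :=
  (((WithLp.prodContinuousLinearEquiv 2 ℂ H H).symm : (H × H) →L[ℂ] K).comp
      ((((a.comp (fst ℂ H H)) + (b.comp (snd ℂ H H))).prod
        ((c.comp (fst ℂ H H)) + (d.comp (snd ℂ H H)))))).comp
    ((WithLp.prodContinuousLinearEquiv 2 ℂ H H : K →L[ℂ] (H × H)))

/-- The fundamental symmetry `J = [[1,0],[0,-1]]`. -/
def fundJ : K →L[ℂ] K := blk 1 0 0 (-1)

/-- A bounded operator `T` on the Krein space `(K, J)` is `J`-unitary if it is invertible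
and `T* J T = J`. -/
def IsJUnitary (T : K →L[ℂ] K) : Prop :=
  IsUnit T ∧ star T * fundJ * T = fundJ

set_option linter.unusedSectionVars false

lemma blk_fst (a b c d : H →L[ℂ] H) (x : K) : ((blk a b c d) x).fst = a x.fst + b x.snd := rfl
lemma blk_snd (a b c d : H →L[ℂ] H) (x : K) : ((blk a b c d) x).snd = c x.fst + d x.snd := rfl

lemma K_ext {x y : K} (h1 : x.fst = y.fst) (h2 : x.snd = y.snd) : x = y := WithLp.ofLp_injective 2 (Prod.ext h1 h2)

lemma blk_mul (a b c d a' b' c' d' : H →L[ℂ] H) :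
    blk a b c d * blk a' b' c' d' =
      blk (a * a' + b * c') (a * b' + b * d') (c * a' + d * c') (c * b' + d * d') := by
  ext x
  · exact K_ext (by simp [blk_fst, blk_snd, mul_apply]; abel)
      (by simp [blk_fst, blk_snd, mul_apply]; abel)

lemma blk_inj {a b c d a' b' c' d' : H →L[ℂ] H}
    (h : blk a b c d = blk a' b' c' d') : a = a' ∧ b = b' ∧ c = c' ∧ d = d' := by
  refine ⟨?_, ?_, ?_, ?_⟩ <;> ext v
  · have := congrArg (fun T => ((T : K →L[ℂ] K) ((WithLp.equiv 2 (H × H)).symm (v, 0))).fst) h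
    simpa [blk_fst] using this
  · have := congrArg (fun T => ((T : K →L[ℂ] K) ((WithLp.equiv 2 (H × H)).symm (0, v))).fst) h
    simpa [blk_fst] using this
  · have := congrArg (fun T => ((T : K →L[ℂ] K) ((WithLp.equiv 2 (H × H)).symm (v, 0))).snd) h
    simpa [blk_snd] using this
  · have := congrArg (fun T => ((T : K →L[ℂ] K) ((WithLp.equiv 2 (H × H)).symm (0, v))).snd) h
    simpa [blk_snd] using this

lemma star_blk (a b c d : H →L[ℂ] H) :
    star (blk a b c d) = blk (star a) (star c) (star b) (star d) := by
  rw [star_eq_adjoint]; symm; rw [eq_adjoint_iff]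
  intro x y
  simp only [WithLp.prod_inner_apply, WithLp.ofLp_fst, WithLp.ofLp_snd, blk_fst, blk_snd, star_eq_adjoint,
    inner_add_left, inner_add_right, adjoint_inner_left]
  ring

/-- left+right invertible implies unit -/
lemma isUnit_of_star (a : H →L[ℂ] H) (h1 : IsUnit (star a * a)) (h2 : IsUnit (a * star a)) :
    IsUnit a := by
  have hr : a * (star a * Ring.inverse (a * star a)) = 1 := by
    rw [← mul_assoc, Ring.mul_inverse_cancel _ h2]
  have hl : (Ring.inverse (star a * a) * star a) * a = 1 := by
    rw [mul_assoc, Ring.inverse_mul_cancel _ h1]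
  have heq : Ring.inverse (star a * a) * star a = star a * Ring.inverse (a * star a) := by
    calc Ring.inverse (star a * a) * star a
        = (Ring.inverse (star a * a) * star a) * (a * (star a * Ring.inverse (a * star a))) := by
          rw [hr, mul_one]
      _ = ((Ring.inverse (star a * a) * star a) * a) * (star a * Ring.inverse (a * star a)) := by
          noncomm_ring
      _ = star a * Ring.inverse (a * star a) := by rw [hl, one_mul]
  exact ⟨⟨a, star a * Ring.inverse (a * star a), hr, by rw [← heq]; exact hl⟩, rfl⟩


/-- from the proof of Proposition 5.12 of the paper: for a `J`-unitary
`T = [[a,b],[c,d]]` and a fixed vector `Tφ = φ`, the quadratic form of the block-diagonal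
operator `[[−(a*)⁻¹, 0],[0, d⁻¹]]` at `φ` equals `−⟪φ, Jφ⟫`. -/
theorem phase_speed_eq_neg_J_form (a b c d : H →L[ℂ] H)
    (hT : IsJUnitary (blk a b c d)) (φ : K) (hφ : (blk a b c d) φ = φ) :
    (inner ℂ φ ((blk (-(Ring.inverse (star a))) 0 0 (Ring.inverse d)) φ) : ℂ)
      = -(inner ℂ φ ((fundJ : K →L[ℂ] K) φ) : ℂ) := by
  obtain ⟨hU, hJ⟩ := hT
  have hJdef : fundJ = blk (1 : H →L[ℂ] H) 0 0 (-1) := rfl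
  -- block equations from T* J T = J
  have h2 := hJ
  rw [hJdef, star_blk, blk_mul, blk_mul] at h2
  simp only [mul_one, mul_zero, zero_add, add_zero, mul_neg, one_mul, zero_mul, neg_zero] at h2
  obtain ⟨e11, e12, e21, e22⟩ := blk_inj h2
  -- e11 : star a * a + -(star c * c) = 1 (guess); check forms below
  -- J * J = 1
  have hJJ : fundJ * fundJ = (1 : K →L[ℂ] K) := by
    rw [hJdef, blk_mul]
    simp only [mul_one, mul_zero, zero_add, add_zero, one_mul, zero_mul, neg_mul, neg_neg]
    ext x
    exact K_ext (by simp [blk_fst]) (by simp [blk_snd])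
  -- T J T* = J
  set T := blk a b c d with hTdef
  have hLT : (fundJ * star T * fundJ) * T = 1 := by
    calc (fundJ * star T * fundJ) * T = fundJ * (star T * fundJ * T) := by noncomm_ring
      _ = fundJ * fundJ := by rw [hJ]
      _ = 1 := hJJ
  obtain ⟨R, hR⟩ := hU.exists_right_inv
  have hRL : fundJ * star T * fundJ = R := by
    calc fundJ * star T * fundJ = (fundJ * star T * fundJ) * (T * R) := by rw [hR, mul_one]
      _ = ((fundJ * star T * fundJ) * T) * R := by noncomm_ring
      _ = R := by rw [hLT, one_mul]
  have hTL : T * (fundJ * star T * fundJ) = 1 := by rw [hRL, hR]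
  have hTJT : T * fundJ * star T = fundJ := by
    calc T * fundJ * star T = (T * (fundJ * star T * fundJ)) * fundJ := by
          rw [mul_assoc, mul_assoc, mul_assoc, hJJ, mul_one]
      _ = fundJ := by rw [hTL, one_mul]
  have h3 := hTJT
  rw [hJdef, hTdef, star_blk, blk_mul, blk_mul] at h3
  simp only [mul_one, mul_zero, zero_add, add_zero, mul_neg, one_mul, zero_mul, neg_zero,
    neg_mul] at h3
  obtain ⟨f11, f12, f21, f22⟩ := blk_inj h3
  -- a and d are units
  have hca : c * star a = d * star b := by rwa [add_neg_eq_zero] at f21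
  have hsaa : star a * a = 1 + star c * c := by rw [← e11]; noncomm_ring
  have hasa : a * star a = 1 + b * star b := by
    have : a * star a = a * star a + -(b * star b) + b * star b := by abel
    rw [this, f11]
  have hsdd : star d * d = 1 + star b * b := by
    have h : star b * b - star d * d = -1 := by rw [sub_eq_add_neg]; exact e22
    rw [sub_eq_iff_eq_add.mp h]; abel
  have hdsd : d * star d = 1 + c * star c := by
    have h : c * star c - d * star d = -1 := by rw [sub_eq_add_neg]; exact f22
    rw [sub_eq_iff_eq_add.mp h]; abel
  have ha : IsUnit a := by
    refine isUnit_of_star a ?_ ?_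
    · exact CStarAlgebra.isUnit_of_le 1
        (hsaa ▸ le_add_of_nonneg_right (star_mul_self_nonneg c)) isStrictlyPositive_one
    · exact CStarAlgebra.isUnit_of_le 1
        (hasa ▸ le_add_of_nonneg_right (mul_star_self_nonneg b)) isStrictlyPositive_one
  have hd : IsUnit d := by
    refine isUnit_of_star d ?_ ?_
    · exact CStarAlgebra.isUnit_of_le 1
        (hsdd ▸ le_add_of_nonneg_right (star_mul_self_nonneg b)) isStrictlyPositive_one
    · exact CStarAlgebra.isUnit_of_le 1
        (hdsd ▸ le_add_of_nonneg_right (mul_star_self_nonneg c)) isStrictlyPositive_one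
  set A := Ring.inverse (star a) with hA
  set D := Ring.inverse d with hD
  have hkey : D * c = star b * A := by
    calc D * c = D * c * (star a * A) := by
          rw [hA, Ring.mul_inverse_cancel _ ha.star, mul_one]
      _ = D * (c * star a) * A := by noncomm_ring
      _ = D * (d * star b) * A := by rw [hca]
      _ = (D * d) * (star b * A) := by noncomm_ring
      _ = star b * A := by rw [hD, Ring.inverse_mul_cancel _ hd, one_mul]
  -- fixed point components
  have hx : a φ.fst + b φ.snd = φ.fst := by
    have := congrArg (fun z : K => z.fst) hφ
    simpa [hTdef, blk_fst] using this
  have hy : c φ.fst + d φ.snd = φ.snd := by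
    have := congrArg (fun z : K => z.snd) hφ
    simpa [hTdef, blk_snd] using this
  set x := φ.fst
  set y := φ.snd
  -- key inner product identities
  have key1 : (inner ℂ x (A x) : ℂ) = inner ℂ x x + inner ℂ y ((star b * A) x) := by
    calc (inner ℂ x (A x) : ℂ) = inner ℂ (a x + b y) (A x) := by rw [hx]
      _ = inner ℂ (a x) (A x) + inner ℂ (b y) (A x) := inner_add_left _ _ _
      _ = (inner ℂ x ((star a) (A x)) : ℂ) + inner ℂ y ((star b) (A x)) := by
          rw [star_eq_adjoint, star_eq_adjoint, adjoint_inner_right, adjoint_inner_right]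
      _ = inner ℂ x ((star a * A) x) + inner ℂ y ((star b * A) x) := rfl
      _ = inner ℂ x x + (inner ℂ y ((star b * A) x) : ℂ) := by
          rw [hA, Ring.mul_inverse_cancel _ ha.star, one_apply_eq_self]
  have key2 : (inner ℂ y (D y) : ℂ) = inner ℂ y ((star b * A) x) + inner ℂ y y := by
    calc (inner ℂ y (D y) : ℂ) = inner ℂ y (D (c x + d y)) := by rw [hy]
      _ = inner ℂ y ((D * c) x + (D * d) y) := by rw [mul_apply_eq_comp, mul_apply_eq_comp, map_add]
      _ = inner ℂ y ((star b * A) x + y) := by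
          rw [hkey, hD, Ring.inverse_mul_cancel _ hd, one_apply_eq_self]
      _ = inner ℂ y ((star b * A) x) + inner ℂ y y := inner_add_right _ _ _
  -- expand the goal
  simp only [hJdef, WithLp.prod_inner_apply, WithLp.ofLp_fst, WithLp.ofLp_snd, blk_fst, blk_snd, zero_apply, add_zero, zero_add,
    one_apply_eq_self, neg_apply, inner_neg_right]
  rw [key1, key2]
  ring
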